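/- Let 0 < p < 1 and let (M, d, 0) be a pointed p-metric space containing distinct points x, y ≠ 0 with d(x, y) < d(x, 0). Then there exists α > 0 such that ‖δ(x) + α δ(y)‖^p_{F_p({0,x,y})} < d(x,0)^p + α^p d(y,0)^p, where ‖a δ(x) + b δ(y)‖^p_{F_p({0,x,y})} is given by the three-term minimum formula min{|a|^p d(x,0)^p + |b|^p d(y,0)^p, |a+b|^p d(x,0)^p + |b|^p d(x,y)^p, |a+b|^p d(y,0)^p + |a|^p d(x,y)^p}. -/
import Mathlib

/-- if `d(x,y) < d(x,0)` in a pointed `p`-metric space with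
`0 < p < 1`, there is `α > 0` for which the three-term minimum formula for
`‖δ(x) + α δ(y)‖^p` on `{0, x, y}` is strictly less than
`d(x,0)^p + α^p d(y,0)^p`.  Here `dx0 = d(x,0)`, `dy0 = d(y,0)`,
`dxy = d(x,y)`. -/
theorem stmt_12 (p : ℝ) (hp0 : 0 < p) (hp1 : p < 1)
    (dx0 dy0 dxy : ℝ) (hdx0 : 0 < dx0) (hdy0 : 0 < dy0) (hdxy : 0 < dxy)
    (t1 : dx0 ^ p ≤ dy0 ^ p + dxy ^ p) (t2 : dy0 ^ p ≤ dx0 ^ p + dxy ^ p)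
    (t3 : dxy ^ p ≤ dx0 ^ p + dy0 ^ p)
    (hlt : dxy < dx0) :
    ∃ α : ℝ, 0 < α ∧
      min (min (dx0 ^ p + α ^ p * dy0 ^ p) ((1 + α) ^ p * dx0 ^ p + α ^ p * dxy ^ p))
          ((1 + α) ^ p * dy0 ^ p + dxy ^ p)
        < dx0 ^ p + α ^ p * dy0 ^ p := by
  have hdy : (0:ℝ) < dy0 ^ p := Real.rpow_pos_of_pos hdy0 p
  have hεpos : 0 < dx0 ^ p - dxy ^ p := by
    have := Real.rpow_lt_rpow hdxy.le hlt hp0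
    linarith
  set ε := (dx0 ^ p - dxy ^ p) / dy0 ^ p with hε
  have hε0 : 0 < ε := div_pos hεpos hdy
  have hpe : 0 < p / ε := div_pos hp0 hε0
  set A := (p / ε) ^ (1 / (1 - p)) with hA
  have hA0 : 0 < A := Real.rpow_pos_of_pos hpe _
  refine ⟨1 + A, by linarith, ?_⟩
  set α := 1 + A with hα
  have hα0 : 0 < α := by linarith
  have hαA : A < α := by rw [hα]; linarith
  have h1p : 0 < 1 - p := by linarith
  have hA1p : A ^ (1 - p) = p / ε := by
    rw [hA, ← Real.rpow_mul hpe.le, one_div_mul_cancel (by linarith), Real.rpow_one]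
  have hα1p : p / ε < α ^ (1 - p) := by
    rw [← hA1p]; exact Real.rpow_lt_rpow hA0.le hαA h1p
  have key : (1 + α) ^ p - α ^ p < ε := by
    have h1 : (1 + α) ^ p ≤ α ^ p * (1 + p * (1 / α)) := by
      have heq : (1 : ℝ) + α = α * (1 + 1 / α) := by field_simp; ring
      rw [heq, Real.mul_rpow hα0.le (by positivity)]
      have hb : (1 + 1 / α) ^ p ≤ 1 + p * (1 / α) :=
        rpow_one_add_le_one_add_mul_self (le_trans (by norm_num : (-1:ℝ) ≤ 0) (by positivity)) hp0.le hp1.le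
      have hαp : (0:ℝ) < α ^ p := Real.rpow_pos_of_pos hα0 p
      nlinarith
    have h2 : α ^ p * (p * (1 / α)) < ε := by
      have hfrac : α ^ p * (1 / α) = α ^ (p - 1) := by
        rw [Real.rpow_sub hα0, Real.rpow_one]; ring
      have hneg : α ^ (p - 1) = (α ^ (1 - p))⁻¹ := by
        rw [show p - 1 = -(1 - p) by ring, Real.rpow_neg hα0.le]
      have hpos : (0:ℝ) < α ^ (1 - p) := Real.rpow_pos_of_pos hα0 _
      have : p * (α ^ (1 - p))⁻¹ < ε := by
        rw [mul_inv_lt_iff₀ hpos]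
        calc p = (p / ε) * ε := by field_simp
        _ < α ^ (1 - p) * ε := by exact mul_lt_mul_of_pos_right hα1p hε0
        _ = ε * α ^ (1 - p) := by ring
      calc α ^ p * (p * (1 / α)) = p * (α ^ p * (1 / α)) := by ring
      _ = p * (α ^ (1 - p))⁻¹ := by rw [hfrac, hneg]
      _ < ε := this
    nlinarith
  have hεeq : ε * dy0 ^ p = dx0 ^ p - dxy ^ p := by
    rw [hε]; field_simp
  have hthird : (1 + α) ^ p * dy0 ^ p + dxy ^ p < dx0 ^ p + α ^ p * dy0 ^ p := by
    have := mul_lt_mul_of_pos_right key hdy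
    rw [sub_mul, hεeq] at this
    linarith
  calc min (min (dx0 ^ p + α ^ p * dy0 ^ p) ((1 + α) ^ p * dx0 ^ p + α ^ p * dxy ^ p))
          ((1 + α) ^ p * dy0 ^ p + dxy ^ p) ≤ (1 + α) ^ p * dy0 ^ p + dxy ^ p := min_le_right _ _
    _ < dx0 ^ p + α ^ p * dy0 ^ p := hthird
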